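/- Let β > 1 and n ≥ 1. The cylinders of order n for the β-transformation are pairwise disjoint intervals partitioning [0,1); order them from left to right. Then among any n+1 consecutive cylinders of order n (i.e. any n+1 cylinders that are adjacent in this ordering, so that the closure of their union is an interval), at least one is a full cylinder, i.e. has length exactly β^{−n}. -/

import Mathlib

/-- The β-transformation `x ↦ βx - ⌊βx⌋` on `[0,1)`. -/
noncomputable def betaT (β : ℝ) : ℝ → ℝ := fun x => Int.fract (β * x)

/-- The cylinder of order `n` (with respect to base `β`) determined by the word `w`:
`I_{n,β}(w) = {x ∈ [0,1) : ε_i(x,β) = w_i, 1 ≤ i ≤ n}`. -/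
noncomputable def cylinder (β : ℝ) (n : ℕ) (w : Fin n → ℤ) : Set ℝ :=
  {x | x ∈ Set.Ico (0 : ℝ) 1 ∧ ∀ i : Fin n, ⌊β * (betaT β)^[(i : ℕ)] x⌋ = w i}

namespace BetaBW

def ext {n : ℕ} (w : Fin n → ℤ) : ℕ → ℤ := fun i => if h : i < n then w ⟨i, h⟩ else 0

noncomputable def Vv (β : ℝ) (u : ℕ → ℤ) (k : ℕ) : ℝ :=
  ∑ i ∈ Finset.range k, (u i : ℝ) / β ^ (i + 1)

noncomputable def gg (β : ℝ) (u : ℕ → ℤ) (k : ℕ) : ℝ := Vv β u k + (β ^ k)⁻¹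

lemma gg_zero (β : ℝ) (u : ℕ → ℤ) : gg β u 0 = 1 := by simp [gg, Vv]

lemma Vv_succ (β : ℝ) (u : ℕ → ℤ) (k : ℕ) :
    Vv β u (k + 1) = Vv β u k + (u k : ℝ) / β ^ (k + 1) := Finset.sum_range_succ _ _

lemma iter_formula {β : ℝ} (hβ : 1 < β) (u : ℕ → ℤ) (x : ℝ) (k : ℕ)
    (h : ∀ i < k, ⌊β * (betaT β)^[i] x⌋ = u i) :
    (betaT β)^[k] x = β ^ k * (x - Vv β u k) := by
  have hb : (0 : ℝ) < β := lt_trans one_pos hβ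
  induction k with
  | zero => simp [Vv]
  | succ k ih =>
    rw [Function.iterate_succ_apply', betaT, Int.fract, h k (by omega),
      ih (fun i hi => h i (by omega)), Vv_succ]
    have : (β:ℝ) ^ (k+1) ≠ 0 := by positivity
    field_simp
    ring

lemma step_iff {β : ℝ} (hβ : 1 < β) (u : ℕ → ℤ) (x : ℝ) (k : ℕ)
    (hiter : (betaT β)^[k] x = β ^ k * (x - Vv β u k)) :
    ⌊β * (betaT β)^[k] x⌋ = u k ↔
      Vv β u (k + 1) ≤ x ∧ x < Vv β u (k + 1) + (β ^ (k + 1))⁻¹ := by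
  have hb : (0 : ℝ) < β := lt_trans one_pos hβ
  have hpow : (0 : ℝ) < β ^ (k + 1) := by positivity
  have hmul : β * (β ^ k * (x - Vv β u k)) = β ^ (k+1) * (x - Vv β u k) := by ring
  rw [hiter, hmul, Int.floor_eq_iff, Vv_succ]
  constructor
  · rintro ⟨h1, h2⟩
    constructor
    · have := (div_le_iff₀ hpow).mpr (by linarith [h1] : (u k : ℝ) ≤ (x - Vv β u k) * β ^ (k+1))
      linarith
    · have h2' : (x - Vv β u k) * β ^ (k+1) < (u k : ℝ) + 1 := by linarith [h2]
      have := (lt_div_iff₀ hpow).mpr h2'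
      have hdiv : ((u k : ℝ) + 1) / β ^ (k+1) = (u k : ℝ) / β ^ (k+1) + (β ^ (k+1))⁻¹ := by
        field_simp
      linarith [this, hdiv ▸ this]
  · rintro ⟨h1, h2⟩
    constructor
    · have : (u k : ℝ) / β ^ (k+1) ≤ x - Vv β u k := by linarith
      have := (div_le_iff₀ hpow).mp this
      linarith [this]
    · have : x - Vv β u k < ((u k : ℝ) + 1) / β ^ (k+1) := by
        have hdiv : ((u k : ℝ) + 1) / β ^ (k+1) = (u k : ℝ) / β ^ (k+1) + (β ^ (k+1))⁻¹ := by
          field_simp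
        linarith [hdiv]
      have := (lt_div_iff₀ hpow).mp (by linarith : x - Vv β u k < ((u k:ℝ)+1) / β ^ (k+1))
      linarith [this]

lemma mem_cylinder_iff {β : ℝ} (hβ : 1 < β) {n : ℕ} (w : Fin n → ℤ) (x : ℝ) :
    x ∈ cylinder β n w ↔ x ∈ Set.Ico (0:ℝ) 1 ∧
      ∀ k < n, Vv β (ext w) (k+1) ≤ x ∧ x < Vv β (ext w) (k+1) + (β ^ (k+1))⁻¹ := by
  constructor
  · rintro ⟨hx, hd⟩
    have hd' : ∀ i < n, ⌊β * (betaT β)^[i] x⌋ = ext w i := by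
      intro i hi
      simpa [ext, hi] using hd ⟨i, hi⟩
    refine ⟨hx, fun k hk => ?_⟩
    have hiter := iter_formula hβ (ext w) x k (fun i hi => hd' i (lt_trans hi hk))
    exact (step_iff hβ (ext w) x k hiter).mp (hd' k hk)
  · rintro ⟨hx, h⟩
    have key : ∀ k, k < n → ⌊β * (betaT β)^[k] x⌋ = ext w k := by
      intro k
      induction k using Nat.strong_induction_on with
      | _ k ih =>
        intro hk
        have hiter := iter_formula hβ (ext w) x k (fun i hi => ih i hi (lt_trans hi hk))
        exact (step_iff hβ (ext w) x k hiter).mpr (h k hk)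
    refine ⟨hx, fun i => ?_⟩
    have := key i i.isLt
    simpa [ext, i.isLt] using this



-- digits nonneg
lemma digits_nonneg {β : ℝ} (hβ : 1 < β) {n : ℕ} {w : Fin n → ℤ}
    (hne : (cylinder β n w).Nonempty) : ∀ i, 0 ≤ ext w i := by
  obtain ⟨x, hx, hd⟩ := hne
  intro i
  by_cases hi : i < n
  · have : ext w i = ⌊β * (betaT β)^[i] x⌋ := by simp [ext, hi]; exact (hd ⟨i, hi⟩).symm
    rw [this]
    have hT : 0 ≤ (betaT β)^[i] x := by
      cases i with
      | zero => exact hx.1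
      | succ j => rw [Function.iterate_succ_apply']; exact Int.fract_nonneg _
    exact Int.floor_nonneg.mpr (mul_nonneg (by linarith) hT)
  · simp [ext, hi]

lemma Vv_mono {β : ℝ} (hβ : 1 < β) {u : ℕ → ℤ} (hu : ∀ i, 0 ≤ u i) {j k : ℕ} (h : j ≤ k) :
    Vv β u j ≤ Vv β u k := by
  have hb : (0:ℝ) < β := lt_trans one_pos hβ
  apply Finset.sum_le_sum_of_subset_of_nonneg (Finset.range_mono h)
  intro i _ _
  have : (0:ℝ) ≤ (u i : ℝ) := by exact_mod_cast hu i
  positivity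

lemma Vv_nonneg {β : ℝ} (hβ : 1 < β) {u : ℕ → ℤ} (hu : ∀ i, 0 ≤ u i) (k : ℕ) :
    0 ≤ Vv β u k := by
  simpa [Vv] using Vv_mono hβ hu (Nat.zero_le k)

noncomputable def RR (β : ℝ) (u : ℕ → ℤ) (n : ℕ) : ℝ :=
  (Finset.range (n+1)).inf' (⟨0, by simp⟩ : (Finset.range (n+1)).Nonempty) (gg β u)

lemma RR_le_gg (β : ℝ) (u : ℕ → ℤ) {n k : ℕ} (hk : k ≤ n) : RR β u n ≤ gg β u k :=
  Finset.inf'_le _ (Finset.mem_range.mpr (by omega))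

lemma RR_le_one (β : ℝ) (u : ℕ → ℤ) (n : ℕ) : RR β u n ≤ 1 := by
  have := RR_le_gg β u (Nat.zero_le n)
  simpa [gg, Vv] using this

noncomputable def MM (β : ℝ) (u : ℕ → ℤ) (n : ℕ) : ℕ := sInf {k | gg β u k = RR β u n}

lemma MM_spec (β : ℝ) (u : ℕ → ℤ) (n : ℕ) :
    gg β u (MM β u n) = RR β u n ∧ MM β u n ≤ n := by
  obtain ⟨i, hi, hieq⟩ := Finset.exists_mem_eq_inf' (⟨0, by simp⟩ : (Finset.range (n+1)).Nonempty) (gg β u)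
  have hmem : i ∈ {k | gg β u k = RR β u n} := hieq.symm
  constructor
  · exact Nat.sInf_mem ⟨i, hmem⟩
  · exact le_trans (Nat.sInf_le hmem) (by simpa using Nat.lt_succ_iff.mp (Finset.mem_range.mp hi))

lemma RR_lt_gg_of_lt_MM (β : ℝ) (u : ℕ → ℤ) {n k : ℕ} (hk : k < MM β u n) :
    RR β u n < gg β u k := by
  have hkn : k ≤ n := le_trans (Nat.le_of_lt hk) (MM_spec β u n).2
  refine lt_of_le_of_ne (RR_le_gg β u hkn) ?_
  intro h
  exact (Nat.notMem_of_lt_sInf hk) h.symm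


end BetaBW
section TestC
open BetaBW
variable {β : ℝ}

lemma cylinder_eq {β : ℝ} (hβ : 1 < β) {n : ℕ} (hn : 1 ≤ n) (w : Fin n → ℤ)
    (hne : (cylinder β n w).Nonempty) :
    cylinder β n w = Set.Ico (Vv β (ext w) n) (RR β (ext w) n) := by
  have hb : (0:ℝ) < β := lt_trans one_pos hβ
  have hu := digits_nonneg hβ hne
  ext x
  rw [mem_cylinder_iff hβ]
  constructor
  · rintro ⟨⟨hx0, hx1⟩, h⟩
    constructor
    · obtain ⟨n', rfl⟩ : ∃ n', n = n' + 1 := ⟨n - 1, by omega⟩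
      exact (h n' (by omega)).1
    · rw [RR]; refine (Finset.lt_inf'_iff _).mpr ?_
      intro k hk
      rcases Nat.eq_zero_or_pos k with rfl | hkpos
      · rw [gg_zero]; exact hx1
      · obtain ⟨k', rfl⟩ : ∃ k', k = k' + 1 := ⟨k - 1, by omega⟩
        have hk' : k' < n := by
          have := Finset.mem_range.mp hk; omega
        exact (h k' hk').2
  · rintro ⟨h1, h2⟩
    have hx0 : (0:ℝ) ≤ x := le_trans (Vv_nonneg hβ hu n) h1
    have hx1 : x < 1 := lt_of_lt_of_le h2 (RR_le_one β (ext w) n)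
    refine ⟨⟨hx0, hx1⟩, fun k hk => ?_⟩
    constructor
    · exact le_trans (Vv_mono hβ hu (by omega : k + 1 ≤ n)) h1
    · exact lt_of_lt_of_le h2 (RR_le_gg β (ext w) (by omega : k + 1 ≤ n))

lemma full_of_RR_eq {β : ℝ} (hβ : 1 < β) {n : ℕ} (hn : 1 ≤ n) (w : Fin n → ℤ)
    (hne : (cylinder β n w).Nonempty) (h : RR β (ext w) n = gg β (ext w) n) :
    cylinder β n w = Set.Ico (Vv β (ext w) n) (Vv β (ext w) n + (β ^ n)⁻¹) := by
  rw [cylinder_eq hβ hn w hne, h, gg]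

lemma word_eq_of_mem {β n} {w1 w2 : Fin n → ℤ} {x : ℝ}
    (h1 : x ∈ cylinder β n w1) (h2 : x ∈ cylinder β n w2) : w1 = w2 :=
  funext fun i => (h1.2 i).symm.trans (h2.2 i)

end TestC
section TestD
open BetaBW

lemma next_word {β : ℝ} (hβ : 1 < β) {n : ℕ} (hn : 1 ≤ n) (w : Fin n → ℤ)
    (hne : (cylinder β n w).Nonempty)
    (hnf : RR β (ext w) n < gg β (ext w) n)
    (hR1 : RR β (ext w) n < 1) :
    ∃ w' : Fin n → ℤ, RR β (ext w) n ∈ cylinder β n w' ∧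
      (RR β (ext w') n < gg β (ext w') n → MM β (ext w') n < MM β (ext w) n) := by
  have hb : (0:ℝ) < β := lt_trans one_pos hβ
  have hu := digits_nonneg hβ hne
  obtain ⟨hgm, hmn⟩ := MM_spec β (ext w) n
  have hm1 : 1 ≤ MM β (ext w) n := by
    rcases Nat.eq_zero_or_pos (MM β (ext w) n) with h0 | h
    · rw [h0, gg_zero] at hgm; linarith [hgm ▸ hR1]
    · exact h
  have hmltn : MM β (ext w) n < n := by
    rcases lt_or_eq_of_le hmn with h | h; · exact h
    · exfalso; rw [h] at hgm; linarith [hgm ▸ hnf]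
  obtain ⟨p, hmp⟩ : ∃ p, MM β (ext w) n = p + 1 := ⟨MM β (ext w) n - 1, by omega⟩
  rw [hmp] at hgm hmltn
  set u : ℕ → ℤ := ext w with hudef
  set u' : ℕ → ℤ := fun i => if i < p then u i else if i = p then u p + 1 else 0 with hu'def
  set w' : Fin n → ℤ := fun i => u' i with hw'def
  have hext : ext w' = u' := by
    funext i
    by_cases h : i < n
    · simp [ext, h, hw'def]
    · have hip : ¬ (i < p) := by omega
      have hip2 : i ≠ p := by omega
      simp [ext, h, hu'def, hip, hip2]
  have hV'low : ∀ k, k ≤ p → Vv β u' k = Vv β u k := by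
    intro k hk
    apply Finset.sum_congr rfl
    intro i hi
    have : i < p := by have := Finset.mem_range.mp hi; omega
    simp [hu'def, this]
  have hV'm : Vv β u' (p+1) = RR β u n := by
    rw [Vv_succ, hV'low p le_rfl]
    rw [← hgm, gg, Vv_succ]
    have hpw : (β:ℝ) ^ (p+1) ≠ 0 := by positivity
    simp only [hu'def, lt_self_iff_false, if_false, if_pos rfl]
    push_cast
    field_simp
    ring
  have hV'hi : ∀ k, p + 1 ≤ k → Vv β u' k = RR β u n := by
    intro k hk
    induction k, hk using Nat.le_induction with
    | base => exact hV'm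
    | succ k hk ih =>
      rw [Vv_succ, ih]
      have h1 : ¬ (k < p) := by omega
      have h2 : k ≠ p := by omega
      simp [hu'def, h1, h2]
  have hR0 : 0 ≤ RR β u n := by
    rw [← hgm, gg]
    have := Vv_nonneg hβ hu (p+1)
    positivity
  refine ⟨w', ?_, ?_⟩
  · rw [mem_cylinder_iff hβ, hext]
    refine ⟨⟨hR0, hR1⟩, fun k hk => ?_⟩
    by_cases hkp : k + 1 ≤ p
    · rw [hV'low (k+1) hkp]
      constructor
      · have h1 : Vv β u (k+1) ≤ Vv β u (p+1) := Vv_mono hβ hu (by omega)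
        have h2 : Vv β u (p+1) ≤ RR β u n := by
          rw [← hgm, gg]
          have : (0:ℝ) < (β ^ (p+1))⁻¹ := by positivity
          linarith
        linarith
      · have := RR_lt_gg_of_lt_MM β u (show k + 1 < MM β u n by omega)
        rw [gg] at this
        exact this
    · rw [hV'hi (k+1) (by omega)]
      refine ⟨le_rfl, ?_⟩
      have : (0:ℝ) < (β ^ (k+1))⁻¹ := by positivity
      linarith
  · intro hnf'
    by_contra hcon
    push_neg at hcon
    rw [hext] at hnf' hcon
    rw [hmp] at hcon
    obtain ⟨hgm', hm'n⟩ := MM_spec β u' n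
    have hm'ge : p + 1 ≤ MM β u' n := hcon
    have h1 : gg β u' (MM β u' n) = RR β u n + (β ^ (MM β u' n))⁻¹ := by
      rw [gg, hV'hi _ hm'ge]
    have h2 : gg β u' n = RR β u n + (β ^ n)⁻¹ := by rw [gg, hV'hi n (by omega)]
    have h3 : (β ^ n)⁻¹ ≤ (β ^ (MM β u' n))⁻¹ := by
      apply inv_anti₀ (by positivity)
      exact pow_le_pow_right₀ (le_of_lt hβ) hm'n
    rw [hgm'] at h1
    rw [h1, h2] at hnf'
    linarith

end TestD

open BetaBW in
/-- **Bugeaud–Wang.** Let `β > 1` and `n ≥ 1`. Among any `n+1` consecutive cylinders of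
order `n` — i.e. `n+1` pairwise distinct nonempty cylinders, adjacent in the left-to-right
ordering in the sense that the closure of their union is an interval — at least one is a
full cylinder, i.e. has length exactly `β^{-n}`. -/
theorem exists_full_cylinder_among_consecutive
    (β : ℝ) (hβ : 1 < β) (n : ℕ) (hn : 1 ≤ n)
    (w : Fin (n + 1) → Fin n → ℤ) (hinj : Function.Injective w)
    (hne : ∀ k, (cylinder β n (w k)).Nonempty)
    (hconsec : ∃ a b : ℝ, closure (⋃ k, cylinder β n (w k)) = Set.Icc a b) :
    ∃ k, ∃ a : ℝ, cylinder β n (w k) = Set.Ico a (a + (β ^ n)⁻¹) := by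
  by_contra hfull
  push_neg at hfull
  have hb : (0:ℝ) < β := lt_trans one_pos hβ
  set u : Fin (n+1) → ℕ → ℤ := fun k => ext (w k) with hu
  set L : Fin (n+1) → ℝ := fun k => Vv β (u k) n with hLdef
  set Rt : Fin (n+1) → ℝ := fun k => RR β (u k) n with hRtdef
  have hC : ∀ k, cylinder β n (w k) = Set.Ico (L k) (Rt k) :=
    fun k => cylinder_eq hβ hn (w k) (hne k)
  have hnonfull : ∀ k, Rt k < gg β (u k) n := by
    intro k
    rcases lt_or_eq_of_le (RR_le_gg β (u k) (le_refl n)) with h | h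
    · exact h
    · exact absurd (full_of_RR_eq hβ hn (w k) (hne k) h) (hfull k (Vv β (u k) n))
  have hLR : ∀ k, L k < Rt k := by
    intro k; obtain ⟨x, hx⟩ := hne k; rw [hC k] at hx; exact lt_of_le_of_lt hx.1 hx.2
  have hLmem : ∀ k, L k ∈ cylinder β n (w k) := by
    intro k; rw [hC k]; exact ⟨le_rfl, hLR k⟩
  have hwdet : ∀ k k' (x : ℝ), x ∈ cylinder β n (w k) → x ∈ cylinder β n (w k') → k = k' :=
    fun k k' x h1 h2 => hinj (word_eq_of_mem h1 h2)
  have hLinj : Function.Injective L := by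
    intro k k' h
    exact hwdet k k' (L k) (hLmem k) (by rw [h]; exact hLmem k')
  obtain ⟨a, b, hab⟩ := hconsec
  have hUcc : Set.Icc a b = ⋃ k, Set.Icc (L k) (Rt k) := by
    rw [← hab]
    have hclos : ∀ k, closure (cylinder β n (w k)) = Set.Icc (L k) (Rt k) := by
      intro k; rw [hC k]; exact closure_Ico (ne_of_lt (hLR k))
    apply Set.Subset.antisymm
    · apply closure_minimal
      · exact Set.iUnion_subset fun k =>
          (subset_closure.trans (le_of_eq (hclos k))).trans
            (Set.subset_iUnion (fun j => Set.Icc (L j) (Rt j)) k)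
      · exact isClosed_iUnion_of_finite fun k => isClosed_Icc
    · exact Set.iUnion_subset fun k =>
        (hclos k).symm.trans_subset
          (closure_mono (Set.subset_iUnion (fun j => cylinder β n (w j)) k))
  have hsub : ∀ k, Set.Icc (L k) (Rt k) ⊆ Set.Icc a b := by
    intro k; rw [hUcc]; exact Set.subset_iUnion (fun j => Set.Icc (L j) (Rt j)) k
  -- Claim A : adjacency
  have claimA : ∀ k, Rt k < b → ∃ k', L k' = Rt k := by
    intro k hkb
    set F : Finset ℝ :=
      insert b ((Finset.univ.filter (fun j => Rt k < L j)).image L) with hF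
    have hFne : F.Nonempty := ⟨b, Finset.mem_insert_self _ _⟩
    have hFgt : ∀ r ∈ F, Rt k < r := by
      intro r hr
      rcases Finset.mem_insert.mp hr with rfl | hr
      · exact hkb
      · obtain ⟨j, hj, rfl⟩ := Finset.mem_image.mp hr
        exact (Finset.mem_filter.mp hj).2
    have hμ : Rt k < F.min' hFne := hFgt _ (F.min'_mem hFne)
    set t' : ℝ := (Rt k + F.min' hFne) / 2 with ht'
    have ht1 : Rt k < t' := by rw [ht']; linarith
    have ht2 : t' < F.min' hFne := by rw [ht']; linarith
    have ht'b : t' ≤ b := le_of_lt (lt_of_lt_of_le ht2 (F.min'_le b (Finset.mem_insert_self _ _)))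
    have hat' : a ≤ t' := by
      have h1 : a ≤ L k := (hsub k ⟨le_rfl, le_of_lt (hLR k)⟩).1
      linarith [hLR k]
    have hmem : t' ∈ ⋃ j, Set.Icc (L j) (Rt j) := by rw [← hUcc]; exact ⟨hat', ht'b⟩
    obtain ⟨j, hj⟩ := Set.mem_iUnion.mp hmem
    have hLjt : L j ≤ Rt k := by
      by_contra h
      push_neg at h
      have hjF : L j ∈ F := Finset.mem_insert_of_mem
        (Finset.mem_image_of_mem L (Finset.mem_filter.mpr ⟨Finset.mem_univ j, h⟩))
      have := F.min'_le _ hjF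
      linarith [hj.1]
    rcases eq_or_lt_of_le hLjt with heq | hlt
    · exact ⟨j, heq⟩
    · exfalso
      have hjk : j = k := by
        rcases le_total (L j) (L k) with hLL | hLL
        · refine hwdet j k (L k) ?_ (hLmem k)
          rw [hC j]
          exact ⟨hLL, lt_of_lt_of_le (lt_trans (hLR k) ht1) hj.2⟩
        · refine (hwdet k j (L j) ?_ (hLmem j)).symm
          rw [hC k]
          exact ⟨hLL, hlt⟩
      rw [hjk] at hj
      linarith [hj.2, ht1]
  -- Claim B
  have claimB : ∀ N k, MM β (u k) n = N →
      (Finset.univ.filter (fun j => L k < L j)).card ≤ N := by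
    intro N
    induction N using Nat.strong_induction_on with
    | _ N ih =>
      intro k hk
      rcases Finset.eq_empty_or_nonempty (Finset.univ.filter (fun j => L k < L j)) with
        hempty | ⟨j0, hj0⟩
      · rw [hempty]; simp
      · have hj0' : L k < L j0 := (Finset.mem_filter.mp hj0).2
        have hdisj : ∀ j, L k < L j → Rt k ≤ L j := by
          intro j hj
          by_contra h
          push_neg at h
          have hmem : L j ∈ cylinder β n (w k) := by
            rw [hC k]; exact ⟨le_of_lt hj, h⟩
          have := hwdet j k (L j) (hLmem j) hmem
          rw [this] at hj; exact lt_irrefl _ hj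
        have hRkb : Rt k < b := by
          have h1 : Rt k ≤ b := (hsub k ⟨le_of_lt (hLR k), le_rfl⟩).2
          rcases lt_or_eq_of_le h1 with h | h
          · exact h
          · exfalso
            have h2 := hdisj j0 hj0'
            have h3 : Rt j0 ≤ b := (hsub j0 ⟨le_of_lt (hLR j0), le_rfl⟩).2
            linarith [hLR j0]
        obtain ⟨k', hk'⟩ := claimA k hRkb
        have hRk1 : Rt k < 1 := by
          have h1 : Rt k' ≤ 1 := RR_le_one β (u k') n
          have h2 := hLR k'
          rw [hk'] at h2
          linarith
        obtain ⟨w', hw'mem, hw'M⟩ := next_word hβ hn (w k) (hne k) (hnonfull k) hRk1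
        have hkw : w k' = w' := by
          refine word_eq_of_mem ?_ hw'mem
          show Rt k ∈ cylinder β n (w k')
          rw [← hk']
          exact hLmem k'
        have hMk' : MM β (u k') n < N := by
          rw [← hk]
          have hval : u k' = ext w' := by rw [hu]; exact congrArg ext hkw
          have hnf' : RR β (ext w') n < gg β (ext w') n := by
            rw [← hval]; exact hnonfull k'
          have := hw'M hnf'
          rw [← hval] at this
          exact this
        have hsubset : (Finset.univ.filter (fun j => L k < L j)) ⊆
            insert k' (Finset.univ.filter (fun j => L k' < L j)) := by
          intro j hj
          have hj' := (Finset.mem_filter.mp hj).2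
          rcases lt_or_ge (L k') (L j) with h | h
          · exact Finset.mem_insert_of_mem (Finset.mem_filter.mpr ⟨Finset.mem_univ _, h⟩)
          · have h2 := hdisj j hj'
            rw [← hk'] at h2
            have : L j = L k' := le_antisymm h h2
            exact Finset.mem_insert.mpr (Or.inl (hLinj this))
        calc (Finset.univ.filter (fun j => L k < L j)).card
            ≤ (insert k' (Finset.univ.filter (fun j => L k' < L j))).card :=
              Finset.card_le_card hsubset
          _ ≤ (Finset.univ.filter (fun j => L k' < L j)).card + 1 :=
              Finset.card_insert_le _ _
          _ ≤ MM β (u k') n + 1 := by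
              have := ih (MM β (u k') n) hMk' k' rfl
              omega
          _ ≤ N := by omega
  -- final contradiction
  obtain ⟨k0, -, hk0⟩ := Finset.exists_min_image Finset.univ L ⟨0, Finset.mem_univ 0⟩
  have hcard : (Finset.univ.filter (fun j => L k0 < L j)).card = n := by
    have heq : Finset.univ.filter (fun j => L k0 < L j) = Finset.univ.erase k0 := by
      ext j
      simp only [Finset.mem_filter, Finset.mem_erase, Finset.mem_univ, true_and, and_true]
      constructor
      · intro h hj; rw [hj] at h; exact lt_irrefl _ h
      · intro hj
        exact lt_of_le_of_ne (hk0 j (Finset.mem_univ j)) (fun h => hj (hLinj h).symm)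
    rw [heq, Finset.card_erase_of_mem (Finset.mem_univ _), Finset.card_univ]
    simp
  have hB := claimB (MM β (u k0) n) k0 rfl
  have hMlt : MM β (u k0) n < n := by
    obtain ⟨hgm, hmn⟩ := MM_spec β (u k0) n
    rcases lt_or_eq_of_le hmn with h | h
    · exact h
    · exfalso; rw [h] at hgm; exact absurd hgm (ne_of_gt (hnonfull k0))
  omega
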